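/- The quantity C_{g−1}(J;W) := min( min_{1≤i<j≤g+1} (J_i + J_j), min_{1≤i<j≤g+1} (W_i + W_j), min_{(i,j)} (J_i + W_j) ), where the last minimum is taken over all pairs 1 ≤ i, j ≤ g+1 with j ≢ i and j ≢ i−1 modulo g+1 (this last family may be empty, in which case it is omitted from the minimum), is a conserved quantity of the UD-pTL: if Σ_{i=1}^{g+1} J_i < Σ_{i=1}^{g+1} W_i, then C_{g−1}(J̄;W̄) = C_{g−1}(J;W). -/

import Mathlib

/-- `X_i = max_{0 ≤ k ≤ g} Σ_{l=1}^{k} (J_{i-l} - W_{i-l})`, indices cyclic mod `g+1`. -/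
noncomputable def udX (g : ℕ) (J W : Fin (g + 1) → ℝ) (i : Fin (g + 1)) : ℝ :=
  (Finset.range (g + 1)).sup' ⟨0, Finset.mem_range.mpr (Nat.succ_pos g)⟩
    (fun k => ∑ l ∈ Finset.Icc 1 k, (J (i - (Fin.ofNat (g + 1) l)) - W (i - (Fin.ofNat (g + 1) l))))

/-- `J̄_i = min(W_i, X_i + J_i)`. -/
noncomputable def udJbar (g : ℕ) (J W : Fin (g + 1) → ℝ) (i : Fin (g + 1)) : ℝ :=
  min (W i) (udX g J W i + J i)

/-- `W̄_i = J_{i+1} + W_i - J̄_i`. -/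
noncomputable def udWbar (g : ℕ) (J W : Fin (g + 1) → ℝ) (i : Fin (g + 1)) : ℝ :=
  J (i + 1) + W i - udJbar g J W i


/-- `C_{g-1}(J;W)`, as an element of `WithTop ℝ`: the minimum of
`J_i + J_j` and `W_i + W_j` over pairs `i < j`, together with `J_i + W_j`
over pairs with `j ≢ i` and `j ≢ i - 1 (mod g+1)`; an empty family
contributes `⊤`, i.e. is omitted from the minimum. -/
noncomputable def udCgm1 (g : ℕ) (J W : Fin (g + 1) → ℝ) : WithTop ℝ :=
  (Finset.univ.filter (fun p : Fin (g + 1) × Fin (g + 1) => p.1 < p.2)).inf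
      (fun p => ((J p.1 + J p.2 : ℝ) : WithTop ℝ)) ⊓
  (Finset.univ.filter (fun p : Fin (g + 1) × Fin (g + 1) => p.1 < p.2)).inf
      (fun p => ((W p.1 + W p.2 : ℝ) : WithTop ℝ)) ⊓
  (Finset.univ.filter
      (fun p : Fin (g + 1) × Fin (g + 1) => p.2 ≠ p.1 ∧ p.2 ≠ p.1 - 1)).inf
      (fun p => ((J p.1 + W p.2 : ℝ) : WithTop ℝ))

/- ### Auxiliary lemmas -/

lemma udX_le_part (g : ℕ) (J W : Fin (g + 1) → ℝ) (i : Fin (g + 1)) {m : ℕ}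
    (hm : m ∈ Finset.range (g + 1)) :
    (∑ l ∈ Finset.Icc 1 m, (J (i - (Fin.ofNat (g + 1) l)) - W (i - (Fin.ofNat (g + 1) l))))
      ≤ udX g J W i := by
  unfold udX
  exact Finset.le_sup'
    (fun k : ℕ => ∑ l ∈ Finset.Icc 1 k, (J (i - (Fin.ofNat (g + 1) l)) - W (i - (Fin.ofNat (g + 1) l)))) hm

lemma udX_nonneg (g : ℕ) (J W : Fin (g + 1) → ℝ) (i : Fin (g + 1)) : 0 ≤ udX g J W i := by
  have h := udX_le_part g J W i (m := 0) (by simp)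
  simpa using h

lemma udX_ge_one (g : ℕ) (hg : 1 ≤ g) (J W : Fin (g + 1) → ℝ) (i : Fin (g + 1)) :
    J (i - 1) - W (i - 1) ≤ udX g J W i := by
  have h := udX_le_part g J W i (m := 1) (by simp; omega)
  simp only [Finset.Icc_self, Finset.sum_singleton] at h
  rw [show Fin.ofNat (g+1) 1 = 1 from Fin.ext (by simp)] at h
  simpa using h

lemma udX_succ_le (g : ℕ) (J W : Fin (g + 1) → ℝ) (i : Fin (g + 1)) :
    udX g J W (i + 1) ≤ max 0 (udX g J W i + J i - W i) := by
  apply Finset.sup'_le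
  intro k hk
  match k with
  | 0 => simpa using le_max_left (0:ℝ) _
  | (m+1) =>
    have hm : m ∈ Finset.range (g+1) := by
      simp only [Finset.mem_range] at hk ⊢; omega
    have hle := udX_le_part g J W i hm
    have hsum : (∑ l ∈ Finset.Icc 1 (m+1),
          (J (i + 1 - (Fin.ofNat (g + 1) l)) - W (i + 1 - (Fin.ofNat (g + 1) l))))
        = (J i - W i) + ∑ l ∈ Finset.Icc 1 m,
          (J (i - (Fin.ofNat (g + 1) l)) - W (i - (Fin.ofNat (g + 1) l))) := by
      have key : ∀ G : ℕ → ℝ, ∀ k : ℕ,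
          ∑ l ∈ Finset.Icc 1 k, G l = ∑ l ∈ Finset.range k, G (1+l) := by
        intro G k
        rw [← Finset.Ico_add_one_right_eq_Icc, Finset.sum_Ico_eq_sum_range]
        simp [Nat.succ_sub_one]
      rw [key, key, Finset.sum_range_succ']
      have e0 : i + 1 - (Fin.ofNat (g+1) (1 + 0 : ℕ)) = i := by
        rw [show Fin.ofNat (g+1) (1 + 0 : ℕ) = 1 from Fin.ext (by simp)]; exact add_sub_cancel_right i 1
      rw [e0, add_comm]
      congr 1
      apply Finset.sum_congr rfl
      intro x _
      have e1 : i + 1 - (Fin.ofNat (g+1) (1 + (x + 1) : ℕ)) = i - (Fin.ofNat (g+1) (1 + x : ℕ)) := by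
        have hA : ∀ a b : ℕ, Fin.ofNat (g+1) (a+b) = Fin.ofNat (g+1) a + Fin.ofNat (g+1) b :=
          fun a b => by ext; simp [Fin.val_add, Nat.add_mod]
        rw [← Nat.add_assoc 1 x 1, hA (1 + x) 1, show Fin.ofNat (g+1) 1 = 1 from Fin.ext (by simp)]
        exact add_sub_add_right_eq_sub i _ 1
      rw [e1]
    show (∑ l ∈ Finset.Icc 1 (m+1),
          (J (i + 1 - (Fin.ofNat (g + 1) l)) - W (i + 1 - (Fin.ofNat (g + 1) l))))
        ≤ max 0 (udX g J W i + J i - W i)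
    rw [hsum]
    have := le_max_right (0:ℝ) (udX g J W i + J i - W i)
    linarith

lemma udW_lt_of_pos (g : ℕ) (J W : Fin (g + 1) → ℝ) (i : Fin (g + 1))
    (h : 0 < udX g J W (i + 1)) : W i < udX g J W i + J i := by
  have h2 := udX_succ_le g J W i
  by_contra hc
  push_neg at hc
  rw [max_eq_left (by linarith)] at h2
  linarith

lemma udWbar_eq_of_pos (g : ℕ) (J W : Fin (g + 1) → ℝ) (i : Fin (g + 1))
    (h : 0 < udX g J W (i + 1)) : udWbar g J W i = J (i + 1) := by
  unfold udWbar udJbar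
  rw [min_eq_left (le_of_lt (udW_lt_of_pos g J W i h))]
  ring

lemma udWbar_ge (g : ℕ) (J W : Fin (g + 1) → ℝ) (i : Fin (g + 1)) :
    J (i + 1) ≤ udWbar g J W i := by
  have := min_le_left (W i) (udX g J W i + J i)
  unfold udWbar udJbar
  linarith

lemma C_le_JJ (g : ℕ) (J W : Fin (g + 1) → ℝ) {a b : Fin (g + 1)} (hab : a ≠ b) :
    udCgm1 g J W ≤ ((J a + J b : ℝ) : WithTop ℝ) := by
  rcases hab.lt_or_gt with hlt | hlt
  · refine le_trans (le_trans inf_le_left inf_le_left) ?_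
    exact Finset.inf_le (f := fun p : Fin (g+1) × Fin (g+1) =>
      ((J p.1 + J p.2 : ℝ) : WithTop ℝ))
      (show ((a, b) : Fin (g+1) × Fin (g+1)) ∈
        Finset.univ.filter (fun p : Fin (g+1) × Fin (g+1) => p.1 < p.2) by simp [hlt])
  · refine le_trans (le_trans inf_le_left inf_le_left) ?_
    have h := Finset.inf_le (f := fun p : Fin (g+1) × Fin (g+1) =>
      ((J p.1 + J p.2 : ℝ) : WithTop ℝ))
      (show ((b, a) : Fin (g+1) × Fin (g+1)) ∈
        Finset.univ.filter (fun p : Fin (g+1) × Fin (g+1) => p.1 < p.2) by simp [hlt])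
    simpa [add_comm] using h

lemma C_le_WW (g : ℕ) (J W : Fin (g + 1) → ℝ) {a b : Fin (g + 1)} (hab : a ≠ b) :
    udCgm1 g J W ≤ ((W a + W b : ℝ) : WithTop ℝ) := by
  rcases hab.lt_or_gt with hlt | hlt
  · refine le_trans (le_trans inf_le_left inf_le_right) ?_
    exact Finset.inf_le (f := fun p : Fin (g+1) × Fin (g+1) =>
      ((W p.1 + W p.2 : ℝ) : WithTop ℝ))
      (show ((a, b) : Fin (g+1) × Fin (g+1)) ∈
        Finset.univ.filter (fun p : Fin (g+1) × Fin (g+1) => p.1 < p.2) by simp [hlt])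
  · refine le_trans (le_trans inf_le_left inf_le_right) ?_
    have h := Finset.inf_le (f := fun p : Fin (g+1) × Fin (g+1) =>
      ((W p.1 + W p.2 : ℝ) : WithTop ℝ))
      (show ((b, a) : Fin (g+1) × Fin (g+1)) ∈
        Finset.univ.filter (fun p : Fin (g+1) × Fin (g+1) => p.1 < p.2) by simp [hlt])
    simpa [add_comm] using h

lemma C_le_JW (g : ℕ) (J W : Fin (g + 1) → ℝ) {a b : Fin (g + 1)}
    (h1 : b ≠ a) (h2 : b ≠ a - 1) :
    udCgm1 g J W ≤ ((J a + W b : ℝ) : WithTop ℝ) := by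
  refine le_trans inf_le_right ?_
  exact Finset.inf_le (f := fun p : Fin (g+1) × Fin (g+1) =>
      ((J p.1 + W p.2 : ℝ) : WithTop ℝ))
      (show ((a, b) : Fin (g+1) × Fin (g+1)) ∈
        Finset.univ.filter (fun p : Fin (g+1) × Fin (g+1) => p.2 ≠ p.1 ∧ p.2 ≠ p.1 - 1) by
          simp [h1, h2])

/-- `C_{g-1}` is a conserved quantity of the UD-pTL. -/
theorem udpToda_Cgm1_conserved (g : ℕ) (hg : 1 ≤ g) (J W : Fin (g + 1) → ℝ)
    (h : ∑ i, J i < ∑ i, W i) :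
    udCgm1 g (udJbar g J W) (udWbar g J W) = udCgm1 g J W := by
  set Jb := udJbar g J W with hJbdef
  set Wb := udWbar g J W with hWbdef
  -- basic real inequalities
  have hJbW : ∀ i, Jb i ≤ W i := fun i => min_le_left _ _
  have hJbX : ∀ i, Jb i ≤ udX g J W i + J i := fun i => min_le_right _ _
  have hWbJ : ∀ i, J (i + 1) ≤ Wb i := fun i => udWbar_ge g J W i
  have hX0 : ∀ i, 0 ≤ udX g J W i := udX_nonneg g J W
  -- Fin facts
  have hsub : ∀ a b : Fin (g+1), a ≠ b → a - 1 ≠ b - 1 := fun a b hab hc =>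
    hab (by simpa using sub_left_injective hc)
  have hsubadd : ∀ a : Fin (g+1), a - 1 + 1 = a := fun a => sub_add_cancel a 1
  have hne_succ : ∀ i : Fin (g+1), i ≠ i + 1 := by
    intro i hc
    have h0 : (0 : Fin (g+1)) = 1 :=
      add_left_cancel (a := i) (b := (0 : Fin (g+1))) (c := 1) (by simpa using hc)
    have h1 : ((1 : Fin (g+1)) : ℕ) = 1 % (g+1) := rfl
    rw [Nat.mod_eq_of_lt (by omega)] at h1
    rw [← h0] at h1
    simp at h1
  apply le_antisymm
  · -- C(J̄, W̄) ≤ C(J, W)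
    refine le_inf (le_inf ?_ ?_) ?_
    · -- old J-J terms
      refine Finset.le_inf ?_
      rintro ⟨a, b⟩ hp
      simp only [Finset.mem_filter, Finset.mem_univ, true_and] at hp
      have hab : a ≠ b := ne_of_lt hp
      by_cases hXa : udX g J W a ≤ 0
      · by_cases hXb : udX g J W b ≤ 0
        · refine le_trans (C_le_JJ g Jb Wb hab) (WithTop.coe_le_coe.mpr ?_)
          have := hJbX a; have := hJbX b
          simp only; linarith
        · push_neg at hXb
          by_cases hb1 : b = a + 1
          · -- special neighbouring case
            subst hb1
            have hXa1 : 0 < udX g J W (a + 1) := hXb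
            have hlt := udW_lt_of_pos g J W a hXa1
            have h2 := udX_succ_le g J W a
            rw [max_eq_right (by linarith)] at h2
            refine le_trans (C_le_JJ g Jb Wb hab) (WithTop.coe_le_coe.mpr ?_)
            have e1 : Jb a = W a := min_eq_left (le_of_lt hlt)
            have e2 := hJbX (a + 1)
            simp only; rw [e1]; linarith
          · have hc1 : b - 1 ≠ a := fun hc => hb1 (by rw [← hc]; exact (hsubadd b).symm)
            have hc2 : b - 1 ≠ a - 1 := hsub b a (Ne.symm hab)
            refine le_trans (C_le_JW g Jb Wb hc1 hc2) (WithTop.coe_le_coe.mpr ?_)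
            have e1 : Wb (b - 1) = J b := by
              rw [hWbdef, udWbar_eq_of_pos g J W (b-1) (by rw [hsubadd b]; exact hXb),
                hsubadd b]
            have := hJbX a
            simp only; rw [e1]; linarith
      · push_neg at hXa
        by_cases hXb : udX g J W b ≤ 0
        · by_cases ha1 : a = b + 1
          · subst ha1
            have hXb1 : 0 < udX g J W (b + 1) := hXa
            have hlt := udW_lt_of_pos g J W b hXb1
            have h2 := udX_succ_le g J W b
            rw [max_eq_right (by linarith)] at h2
            refine le_trans (C_le_JJ g Jb Wb hab) (WithTop.coe_le_coe.mpr ?_)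
            have e1 : Jb b = W b := min_eq_left (le_of_lt hlt)
            have e2 := hJbX (b + 1)
            simp only; rw [e1]; linarith
          · have hc1 : a - 1 ≠ b := fun hc => ha1 (by rw [← hc]; exact (hsubadd a).symm)
            have hc2 : a - 1 ≠ b - 1 := hsub a b hab
            refine le_trans (C_le_JW g Jb Wb hc1 hc2) (WithTop.coe_le_coe.mpr ?_)
            have e1 : Wb (a - 1) = J a := by
              rw [hWbdef, udWbar_eq_of_pos g J W (a-1) (by rw [hsubadd a]; exact hXa),
                hsubadd a]
            have := hJbX b
            simp only; rw [e1]; linarith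
        · push_neg at hXb
          have e1 : Wb (a - 1) = J a := by
            rw [hWbdef, udWbar_eq_of_pos g J W (a-1) (by rw [hsubadd a]; exact hXa),
              hsubadd a]
          have e2 : Wb (b - 1) = J b := by
            rw [hWbdef, udWbar_eq_of_pos g J W (b-1) (by rw [hsubadd b]; exact hXb),
              hsubadd b]
          refine le_trans (C_le_WW g Jb Wb (hsub a b hab)) (WithTop.coe_le_coe.mpr ?_)
          simp only; rw [e1, e2]
    · -- old W-W terms
      refine Finset.le_inf ?_
      rintro ⟨a, b⟩ hp
      simp only [Finset.mem_filter, Finset.mem_univ, true_and] at hp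
      have hab : a ≠ b := ne_of_lt hp
      refine le_trans (C_le_JJ g Jb Wb hab) (WithTop.coe_le_coe.mpr ?_)
      have := hJbW a; have := hJbW b
      simp only; linarith
    · -- old J-W cross terms
      refine Finset.le_inf ?_
      rintro ⟨a, b⟩ hp
      simp only [Finset.mem_filter, Finset.mem_univ, true_and] at hp
      obtain ⟨hba, hba1⟩ := hp
      by_cases hXa : udX g J W a ≤ 0
      · refine le_trans (C_le_JJ g Jb Wb (Ne.symm hba)) (WithTop.coe_le_coe.mpr ?_)
        have := hJbX a; have := hJbW b; have := hX0 a
        simp only; linarith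
      · push_neg at hXa
        have e1 : Wb (a - 1) = J a := by
          rw [hWbdef, udWbar_eq_of_pos g J W (a-1) (by rw [hsubadd a]; exact hXa),
            hsubadd a]
        have hc1 : a - 1 ≠ b := Ne.symm hba1
        have hc2 : a - 1 ≠ b - 1 := hsub a b (Ne.symm hba)
        refine le_trans (C_le_JW g Jb Wb hc1 hc2) (WithTop.coe_le_coe.mpr ?_)
        have := hJbW b
        simp only; rw [e1]; linarith
  · -- C(J, W) ≤ C(J̄, W̄)
    refine le_inf (le_inf ?_ ?_) ?_
    · -- new J̄-J̄ terms
      refine Finset.le_inf ?_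
      rintro ⟨a, b⟩ hp
      simp only [Finset.mem_filter, Finset.mem_univ, true_and] at hp
      have hab : a ≠ b := ne_of_lt hp
      rcases min_cases (W a) (udX g J W a + J a) with ⟨ea, ha'⟩ | ⟨ea, ha'⟩ <;>
        rcases min_cases (W b) (udX g J W b + J b) with ⟨eb, hb'⟩ | ⟨eb, hb'⟩
      · refine le_trans (C_le_WW g J W hab) (WithTop.coe_le_coe.mpr ?_)
        simp only
        rw [hJbdef, udJbar, udJbar, ea, eb]
      · -- Jb a = W a, Jb b = X b + J b
        by_cases hab1 : a = b - 1
        · have hXb := udX_ge_one g hg J W b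
          rw [← hab1] at hXb
          refine le_trans (C_le_JJ g J W hab) (WithTop.coe_le_coe.mpr ?_)
          simp only
          rw [hJbdef, udJbar, udJbar, ea, eb]
          linarith
        · refine le_trans (C_le_JW g J W hab hab1) (WithTop.coe_le_coe.mpr ?_)
          have := hX0 b
          simp only
          rw [hJbdef, udJbar, udJbar, ea, eb]
          linarith
      · -- Jb a = X a + J a, Jb b = W b
        by_cases hba1 : b = a - 1
        · have hXa := udX_ge_one g hg J W a
          rw [← hba1] at hXa
          refine le_trans (C_le_JJ g J W hab) (WithTop.coe_le_coe.mpr ?_)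
          simp only
          rw [hJbdef, udJbar, udJbar, ea, eb]
          linarith
        · refine le_trans (C_le_JW g J W (Ne.symm hab) hba1) (WithTop.coe_le_coe.mpr ?_)
          have := hX0 a
          simp only
          rw [hJbdef, udJbar, udJbar, ea, eb]
          linarith
      · refine le_trans (C_le_JJ g J W hab) (WithTop.coe_le_coe.mpr ?_)
        have := hX0 a; have := hX0 b
        simp only
        rw [hJbdef, udJbar, udJbar, ea, eb]
        linarith
    · -- new W̄-W̄ terms
      refine Finset.le_inf ?_
      rintro ⟨a, b⟩ hp
      simp only [Finset.mem_filter, Finset.mem_univ, true_and] at hp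
      have hab : a + 1 ≠ b + 1 := fun hc => (ne_of_lt hp) (add_left_injective _ hc)
      refine le_trans (C_le_JJ g J W hab) (WithTop.coe_le_coe.mpr ?_)
      have := hWbJ a; have := hWbJ b
      simp only; linarith
    · -- new J̄-W̄ cross terms
      refine Finset.le_inf ?_
      rintro ⟨a, b⟩ hp
      simp only [Finset.mem_filter, Finset.mem_univ, true_and] at hp
      obtain ⟨hba, hba1⟩ := hp
      have hWb := hWbJ b
      rcases min_cases (W a) (udX g J W a + J a) with ⟨ea, ha'⟩ | ⟨ea, ha'⟩
      · -- Jb a = W a : use J (b+1) + W a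
        have hc1 : a ≠ b + 1 := by
          intro hc; exact hba1 (by rw [hc]; simp)
        have hc2 : a ≠ (b + 1) - 1 := by
          intro hc; exact hba (by rw [hc]; simp)
        have hc2 : a ≠ (b + 1) - 1 := by
          rw [add_sub_cancel_right]; exact Ne.symm hba
        refine le_trans (C_le_JW g J W hc1 hc2) (WithTop.coe_le_coe.mpr ?_)
        simp only
        rw [hJbdef, udJbar, ea]
        linarith
      · -- Jb a = X a + J a ≥ J a : use J a + J (b+1)
        have hc1 : a ≠ b + 1 := by
          intro hc; exact hba1 (by rw [hc]; simp)
        refine le_trans (C_le_JJ g J W hc1) (WithTop.coe_le_coe.mpr ?_)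
        have := hX0 a
        simp only
        rw [hJbdef, udJbar, ea]
        linarith
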